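/- For γ > 0, the space H²_γ(ℝ²) is closed under taking powers: if u ∈ H²_γ(ℝ²) and k ≥ 1 is an integer, then u^k ∈ H²_γ(ℝ²). -/

import Mathlib

open MeasureTheory Finset

noncomputable section

open Complex
open scoped ENNReal

/-- Japanese bracket weight `⟨z⟩^γ = (1+|z|²)^{γ/2}` on `ℝ² ≅ ℂ`. -/
def wt (γ : ℝ) (z : ℂ) : ℝ := (1 + ‖z‖ ^ 2) ^ (γ / 2)

/-- Membership in the weighted Sobolev space `H²_γ(ℝ²)`. -/
def H2gammaMem (γ : ℝ) (u : ℂ → ℂ) : Prop :=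
  ContDiff ℝ 2 u ∧
  ∀ i : ℕ, i ≤ 2 →
    MemLp (fun z => wt γ z * ‖iteratedFDeriv ℝ i u z‖) 2 volume

section Aux

variable {E : Type*} [NormedAddCommGroup E] [NormedSpace ℝ E] [CompleteSpace E]

lemma one_le_base (z : ℂ) : (1:ℝ) ≤ 1 + ‖z‖ ^ 2 := le_add_of_nonneg_right (sq_nonneg _)

lemma wt_pos {γ : ℝ} (z : ℂ) : 0 < wt γ z :=
  Real.rpow_pos_of_pos (by positivity) _

lemma one_le_wt {γ : ℝ} (hγ : 0 ≤ γ) (z : ℂ) : 1 ≤ wt γ z :=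
  Real.one_le_rpow (one_le_base z) (by positivity)

lemma wt_le_wt {γ δ : ℝ} (h : γ ≤ δ) (z : ℂ) : wt γ z ≤ wt δ z :=
  Real.rpow_le_rpow_of_exponent_le (one_le_base z) (by linarith)

lemma wt_sq (γ : ℝ) (z : ℂ) : wt γ z ^ 2 = wt (2*γ) z := by
  unfold wt
  rw [← Real.rpow_natCast (_ ^ (γ/2)) 2, ← Real.rpow_mul (by positivity)]
  ring_nf

lemma base_eq (z : ℂ) : 1 + ‖z‖ ^ 2 = 1 + (z.re * z.re + z.im * z.im) := by
  simp [Complex.sq_norm, Complex.normSq_apply]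

lemma contDiff_base : ContDiff ℝ 2 (fun z : ℂ => 1 + ‖z‖ ^ 2) := by
  have : (fun z : ℂ => 1 + ‖z‖ ^ 2) = fun z => 1 + (z.re * z.re + z.im * z.im) := by
    funext z; exact base_eq z
  rw [this]
  exact contDiff_const.add (((Complex.reCLM.contDiff.mul Complex.reCLM.contDiff).add
    (Complex.imCLM.contDiff.mul Complex.imCLM.contDiff)))

lemma contDiff_wt (γ : ℝ) : ContDiff ℝ 2 (wt γ) := by
  rw [contDiff_iff_contDiffAt]
  intro z
  exact (contDiff_base.contDiffAt).rpow_const_of_ne (by positivity)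

lemma wt_continuous (γ : ℝ) : Continuous (wt γ) := (contDiff_wt γ).continuous

lemma norm_reCLM_le : ‖Complex.reCLM‖ ≤ 1 := by
  refine ContinuousLinearMap.opNorm_le_bound _ zero_le_one (fun z => ?_)
  simpa using Complex.abs_re_le_norm z

lemma norm_imCLM_le : ‖Complex.imCLM‖ ≤ 1 := by
  refine ContinuousLinearMap.opNorm_le_bound _ zero_le_one (fun z => ?_)
  simpa using Complex.abs_im_le_norm z

lemma wt_fderiv_bound (γ : ℝ) (hγ : 0 ≤ γ) (z : ℂ) :
    ∃ L : ℂ →L[ℝ] ℝ, HasFDerivAt (wt γ) L z ∧ ‖L‖ ≤ 2 * γ * wt γ z := by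
  set s : ℝ := 1 + ‖z‖ ^ 2 with hs
  have hs1 : (1:ℝ) ≤ s := one_le_base z
  have hs0 : (0:ℝ) < s := lt_of_lt_of_le one_pos hs1
  have h_re : HasFDerivAt (fun w : ℂ => w.re) Complex.reCLM z := Complex.reCLM.hasFDerivAt
  have h_im : HasFDerivAt (fun w : ℂ => w.im) Complex.imCLM z := Complex.imCLM.hasFDerivAt
  have hq : HasFDerivAt (fun w : ℂ => 1 + ‖w‖ ^ 2)
      (0 + (z.re • Complex.reCLM + z.re • Complex.reCLM +
        (z.im • Complex.imCLM + z.im • Complex.imCLM))) z := by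
    have he : (fun w : ℂ => 1 + ‖w‖ ^ 2) = fun w : ℂ => 1 + (w.re * w.re + w.im * w.im) := by
      funext w; exact base_eq w
    rw [he]
    exact (hasFDerivAt_const (1:ℝ) z).add ((h_re.mul h_re).add (h_im.mul h_im))
  have hr : HasDerivAt (fun x : ℝ => x ^ (γ/2)) ((γ/2) * s ^ (γ/2 - 1)) s :=
    Real.hasDerivAt_rpow_const (Or.inl (ne_of_gt hs0))
  have hcomp := hr.comp_hasFDerivAt z hq
  refine ⟨_, hcomp, ?_⟩
  have hzs : ‖z‖ ≤ s ^ ((1:ℝ)/2) := by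
    rw [← Real.sqrt_eq_rpow]
    have h2 : ‖z‖ ^ 2 ≤ s := by nlinarith [sq_nonneg ‖z‖]
    exact (Real.le_sqrt (norm_nonneg z) (le_of_lt hs0)).mpr h2
  have hc0 : 0 ≤ (γ/2) * s ^ (γ/2 - 1) := by positivity
  refine ContinuousLinearMap.opNorm_le_bound _ (mul_nonneg (by linarith) (Real.rpow_pos_of_pos hs0 _).le) (fun x => ?_)
  have hev : (((γ/2) * s ^ (γ/2 - 1)) • (0 + (z.re • Complex.reCLM + z.re • Complex.reCLM +
        (z.im • Complex.imCLM + z.im • Complex.imCLM)))) x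
      = ((γ/2) * s ^ (γ/2 - 1)) * (z.re * x.re + z.re * x.re + (z.im * x.im + z.im * x.im)) := by
    simp [ContinuousLinearMap.smul_apply, ContinuousLinearMap.add_apply]
    ring
  rw [hev]
  have hre1 : |z.re| ≤ ‖z‖ := by simpa using Complex.abs_re_le_norm z
  have him1 : |z.im| ≤ ‖z‖ := by simpa using Complex.abs_im_le_norm z
  have hre2 : |x.re| ≤ ‖x‖ := by simpa using Complex.abs_re_le_norm x
  have him2 : |x.im| ≤ ‖x‖ := by simpa using Complex.abs_im_le_norm x
  have habs : |z.re * x.re + z.re * x.re + (z.im * x.im + z.im * x.im)| ≤ 4 * ‖z‖ * ‖x‖ := by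
    have h1 : |z.re * x.re| ≤ ‖z‖ * ‖x‖ := by rw [abs_mul]; gcongr
    have h2 : |z.im * x.im| ≤ ‖z‖ * ‖x‖ := by rw [abs_mul]; gcongr
    calc |z.re * x.re + z.re * x.re + (z.im * x.im + z.im * x.im)|
        ≤ |z.re * x.re| + |z.re * x.re| + (|z.im * x.im| + |z.im * x.im|) := by
          refine le_trans (abs_add_le _ _) ?_
          gcongr <;> exact abs_add_le _ _
      _ ≤ ‖z‖ * ‖x‖ + ‖z‖ * ‖x‖ + (‖z‖ * ‖x‖ + ‖z‖ * ‖x‖) := by gcongr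
      _ = 4 * ‖z‖ * ‖x‖ := by ring
  rw [Real.norm_eq_abs, abs_mul, _root_.abs_of_nonneg hc0]
  calc (γ/2) * s ^ (γ/2 - 1) * |z.re * x.re + z.re * x.re + (z.im * x.im + z.im * x.im)|
      ≤ (γ/2) * s ^ (γ/2 - 1) * (4 * (s ^ ((1:ℝ)/2)) * ‖x‖) := by
        refine mul_le_mul_of_nonneg_left ?_ hc0
        refine habs.trans ?_
        have : (4:ℝ) * ‖z‖ * ‖x‖ ≤ 4 * (s ^ ((1:ℝ)/2)) * ‖x‖ := by gcongr
        exact this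
    _ = 2 * γ * (s ^ (γ/2 - 1) * s ^ ((1:ℝ)/2)) * ‖x‖ := by ring
    _ = 2 * γ * s ^ (γ/2 - 1 + 1/2) * ‖x‖ := by rw [← Real.rpow_add hs0]
    _ ≤ 2 * γ * s ^ (γ/2) * ‖x‖ :=
        mul_le_mul_of_nonneg_right (mul_le_mul_of_nonneg_left
          (Real.rpow_le_rpow_of_exponent_le hs1 (by linarith)) (by linarith)) (norm_nonneg x)
    _ = 2 * γ * wt γ z * ‖x‖ := rfl

lemma lemA {E : Type*} [NormedAddCommGroup E] [NormedSpace ℝ E] [CompleteSpace E]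
    (φ : ℝ → E) (hd : Differentiable ℝ φ) (hi : Integrable φ)
    (hi' : Integrable (deriv φ)) (x : ℝ) : ‖φ x‖ ≤ ∫ t, ‖deriv φ t‖ := by
  by_contra hlt
  push_neg at hlt
  set C : ℝ := ∫ t, ‖deriv φ t‖ with hC
  have hC0 : 0 ≤ C := integral_nonneg (fun t => norm_nonneg _)
  have key : ∀ a, a ≤ x → ‖φ x‖ - C ≤ ‖φ a‖ := by
    intro a ha
    have hftc : ∫ t in a..x, deriv φ t = φ x - φ a := by
      exact intervalIntegral.integral_deriv_eq_sub (fun t _ => hd t) hi'.intervalIntegrable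
    have h1 : ‖φ x - φ a‖ ≤ C := by
      rw [← hftc]
      refine le_trans (intervalIntegral.norm_integral_le_integral_norm ha) ?_
      rw [intervalIntegral.integral_of_le ha]
      refine le_trans (setIntegral_le_integral hi'.norm ?_) le_rfl
      exact Filter.Eventually.of_forall (fun t => norm_nonneg _)
    have := norm_sub_norm_le (φ x) (φ a)
    linarith [le_trans this h1]
  set ε : ℝ := ‖φ x‖ - C with hε
  have hε0 : 0 < ε := by simp only [hε]; linarith
  have hsub : Set.Iic x ⊆ {t : ℝ | ε ≤ ‖φ t‖} := fun a ha => key a ha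
  have hfin : volume {t : ℝ | ε ≤ ‖φ t‖} < ⊤ := hi.norm.measure_ge_lt_top hε0
  have : volume (Set.Iic x) ≤ volume {t : ℝ | ε ≤ ‖φ t‖} := measure_mono hsub
  rw [Real.volume_Iic] at this
  simp only [top_le_iff] at this
  rw [this] at hfin
  exact lt_irrefl _ hfin

lemma integrable_comp_realProd {g : ℂ → E} (hg : Integrable g) :
    Integrable (fun p : ℝ × ℝ => g (p.1 + p.2 * I)) ((volume : Measure ℝ).prod volume) := by
  have h := (Complex.volume_preserving_equiv_real_prod.symm).integrable_comp_emb
    (Complex.measurableEquivRealProd.symm.measurableEmbedding) (g := g)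
  rw [← MeasureTheory.Measure.volume_eq_prod]
  have h2 : Integrable (g ∘ Complex.measurableEquivRealProd.symm) volume := h.mpr hg
  have he : (g ∘ Complex.measurableEquivRealProd.symm) = fun p : ℝ × ℝ => g (p.1 + p.2 * I) := by
    funext p
    simp [Function.comp, Complex.measurableEquivRealProd_symm_apply, Complex.mk_eq_add_mul_I]
  rwa [he] at h2

lemma lintegral_complex (f : ℂ → ℝ≥0∞) (hf : Measurable f) :
    ∫⁻ z, f z = ∫⁻ x : ℝ, ∫⁻ y : ℝ, f (x + y * I) := by
  have h := (Complex.volume_preserving_equiv_real_prod.symm).lintegral_comp hf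
  rw [← h, MeasureTheory.Measure.volume_eq_prod, lintegral_prod]
  · refine lintegral_congr (fun x => lintegral_congr (fun y => ?_))
    simp [Complex.measurableEquivRealProd_symm_apply, Complex.mk_eq_add_mul_I]
  · exact (hf.comp Complex.measurableEquivRealProd.symm.measurable).aemeasurable

lemma lintegral_complex' (f : ℂ → ℝ≥0∞) (hf : Measurable f) :
    ∫⁻ z, f z = ∫⁻ y : ℝ, ∫⁻ x : ℝ, f (x + y * I) := by
  have h := (Complex.volume_preserving_equiv_real_prod.symm).lintegral_comp hf
  rw [← h, MeasureTheory.Measure.volume_eq_prod, lintegral_prod_symm]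
  · refine lintegral_congr (fun y => lintegral_congr (fun x => ?_))
    simp [Complex.measurableEquivRealProd_symm_apply, Complex.mk_eq_add_mul_I]
  · exact (hf.comp Complex.measurableEquivRealProd.symm.measurable).aemeasurable

lemma ae_im {p : ℝ → Prop} (h : ∀ᵐ y : ℝ, p y) : ∀ᵐ z : ℂ, p z.im := by
  rw [ae_iff] at h ⊢
  obtain ⟨N, hsub, hNm, hN0⟩ := exists_measurable_superset_of_null h
  have h0 : volume (Complex.im ⁻¹' N) = 0 := by
    have hpre : Complex.im ⁻¹' N =
        Complex.measurableEquivRealProd ⁻¹' (Set.univ ×ˢ N) := by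
      ext z
      simp [Complex.measurableEquivRealProd_apply]
    rw [hpre, Complex.volume_preserving_equiv_real_prod.measure_preimage
      ((MeasurableSet.univ.prod hNm).nullMeasurableSet)]
    rw [MeasureTheory.Measure.volume_eq_prod, Measure.prod_prod, hN0, mul_zero]
  exact measure_mono_null (fun z hz => hsub hz) h0

lemma ae_re {p : ℝ → Prop} (h : ∀ᵐ x : ℝ, p x) : ∀ᵐ z : ℂ, p z.re := by
  rw [ae_iff] at h ⊢
  obtain ⟨N, hsub, hNm, hN0⟩ := exists_measurable_superset_of_null h
  have h0 : volume (Complex.re ⁻¹' N) = 0 := by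
    have hpre : Complex.re ⁻¹' N =
        Complex.measurableEquivRealProd ⁻¹' (N ×ˢ Set.univ) := by
      ext z
      simp [Complex.measurableEquivRealProd_apply]
    rw [hpre, Complex.volume_preserving_equiv_real_prod.measure_preimage
      ((hNm.prod MeasurableSet.univ).nullMeasurableSet)]
    rw [MeasureTheory.Measure.volume_eq_prod, Measure.prod_prod, hN0, zero_mul]
  exact measure_mono_null (fun z hz => hsub hz) h0

lemma sliceX (Φ : ℂ → E) (hd : Differentiable ℝ Φ) (hi : Integrable Φ)
    (hi' : Integrable (fun z => fderiv ℝ Φ z 1)) :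
    ∀ᵐ y : ℝ, (Integrable (fun s : ℝ => fderiv ℝ Φ (s + y * I) 1)) ∧
      ∀ x : ℝ, ‖Φ (x + y * I)‖ ≤ ∫ s : ℝ, ‖fderiv ℝ Φ (s + y * I) 1‖ := by
  have hF := integrable_comp_realProd hi
  have hF' := integrable_comp_realProd hi'
  filter_upwards [hF.prod_left_ae, hF'.prod_left_ae] with y h1 h2
  have hline : ∀ x : ℝ, HasDerivAt (fun x : ℝ => (x : ℂ) + y * I) 1 x := by
    intro x
    simpa using (Complex.ofRealCLM.hasDerivAt (x := x)).add_const (y * I)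
  have hder : ∀ x : ℝ, HasDerivAt (fun s : ℝ => Φ (s + y * I))
      (fderiv ℝ Φ (x + y * I) 1) x := by
    intro x
    exact (hd _).hasFDerivAt.comp_hasDerivAt x (hline x)
  have hde : deriv (fun s : ℝ => Φ (s + y * I)) = fun s : ℝ => fderiv ℝ Φ (s + y * I) 1 := by
    funext s; exact (hder s).deriv
  constructor
  · exact h2
  · intro x
    have := lemA (fun s : ℝ => Φ (s + y * I)) (fun s => (hder s).differentiableAt)
      h1 (by rw [hde]; exact h2) x
    rwa [hde] at this

lemma sliceY (Φ : ℂ → E) (hd : Differentiable ℝ Φ) (hi : Integrable Φ)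
    (hi' : Integrable (fun z => fderiv ℝ Φ z I)) :
    ∀ᵐ x : ℝ, (Integrable (fun t : ℝ => fderiv ℝ Φ (x + t * I) I)) ∧
      ∀ y : ℝ, ‖Φ (x + y * I)‖ ≤ ∫ t : ℝ, ‖fderiv ℝ Φ (x + t * I) I‖ := by
  have hF := integrable_comp_realProd hi
  have hF' := integrable_comp_realProd hi'
  filter_upwards [hF.prod_right_ae, hF'.prod_right_ae] with x h1 h2
  have hline : ∀ y : ℝ, HasDerivAt (fun t : ℝ => (x : ℂ) + t * I) I y := by
    intro y
    have h0 : HasDerivAt (fun t : ℝ => (t : ℂ)) 1 y := Complex.ofRealCLM.hasDerivAt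
    simpa using (h0.mul_const I).const_add (x : ℂ)
  have hder : ∀ y : ℝ, HasDerivAt (fun t : ℝ => Φ (x + t * I))
      (fderiv ℝ Φ (x + y * I) I) y := by
    intro y
    exact (hd _).hasFDerivAt.comp_hasDerivAt y (hline y)
  have hde : deriv (fun t : ℝ => Φ (x + t * I)) = fun t : ℝ => fderiv ℝ Φ (x + t * I) I := by
    funext t; exact (hder t).deriv
  constructor
  · exact h2
  · intro y
    have := lemA (fun t : ℝ => Φ (x + t * I)) (fun t => (hder t).differentiableAt)
      h1 (by rw [hde]; exact h2) y
    rwa [hde] at this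


end Aux
section Aux2

-- norm conversions
lemma norm_fd1 (g : ℂ → ℂ) (z : ℂ) : ‖fderiv ℝ g z‖ = ‖iteratedFDeriv ℝ 1 g z‖ := by
  rw [← norm_iteratedFDeriv_fderiv (n := 0), norm_iteratedFDeriv_zero]

lemma norm_fd2 (g : ℂ → ℂ) (z : ℂ) :
    ‖fderiv ℝ (fderiv ℝ g) z‖ = ‖iteratedFDeriv ℝ 2 g z‖ := by
  rw [← norm_iteratedFDeriv_fderiv (n := 1), ← norm_iteratedFDeriv_fderiv (n := 0),
    norm_iteratedFDeriv_zero]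

-- product bounds
lemma mulD1 {f g : ℂ → ℂ} (hf : ContDiff ℝ 1 f) (hg : ContDiff ℝ 1 g) (z : ℂ) :
    ‖iteratedFDeriv ℝ 1 (fun w => f w * g w) z‖ ≤
      ‖f z‖ * ‖iteratedFDeriv ℝ 1 g z‖ + ‖iteratedFDeriv ℝ 1 f z‖ * ‖g z‖ := by
  have := norm_iteratedFDeriv_mul_le (𝕜 := ℝ) (A := ℂ) hf hg z (n := 1) le_rfl
  refine this.trans ?_
  rw [Finset.sum_range_succ, Finset.sum_range_succ, Finset.sum_range_zero]
  simp [norm_iteratedFDeriv_zero]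

lemma mulD2 {f g : ℂ → ℂ} (hf : ContDiff ℝ 2 f) (hg : ContDiff ℝ 2 g) (z : ℂ) :
    ‖iteratedFDeriv ℝ 2 (fun w => f w * g w) z‖ ≤
      ‖f z‖ * ‖iteratedFDeriv ℝ 2 g z‖ +
      2 * (‖iteratedFDeriv ℝ 1 f z‖ * ‖iteratedFDeriv ℝ 1 g z‖) +
      ‖iteratedFDeriv ℝ 2 f z‖ * ‖g z‖ := by
  have := norm_iteratedFDeriv_mul_le (𝕜 := ℝ) (A := ℂ) hf hg z (n := 2) le_rfl
  refine this.trans ?_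
  rw [Finset.sum_range_succ, Finset.sum_range_succ, Finset.sum_range_succ, Finset.sum_range_zero]
  simp [norm_iteratedFDeriv_zero]
  ring_nf
  exact le_refl _

lemma conj_contDiff {n : ℕ∞} {f : ℂ → ℂ} (hf : ContDiff ℝ n f) :
    ContDiff ℝ n (fun z => (starRingEnd ℂ) (f z)) :=
  Complex.conjCLE.contDiff.comp hf

lemma conj_iter_norm (f : ℂ → ℂ) (i : ℕ) (z : ℂ) :
    ‖iteratedFDeriv ℝ i (fun w => (starRingEnd ℂ) (f w)) z‖ = ‖iteratedFDeriv ℝ i f z‖ := by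
  have he : (fun w => (starRingEnd ℂ) (f w)) = (⇑Complex.conjLIE ∘ f) := rfl
  rw [he, Complex.conjLIE.norm_iteratedFDeriv_comp_left f z i]

section Phi
variable {f : ℂ → ℂ}

/-- the real-valued (as complex) square modulus -/
def sqm (f : ℂ → ℂ) : ℂ → ℂ := fun z => f z * (starRingEnd ℂ) (f z)

lemma sqm_norm (f : ℂ → ℂ) (z : ℂ) : ‖sqm f z‖ = ‖f z‖ ^ 2 := by
  rw [sqm, norm_mul, RCLike.norm_conj, sq]

lemma sqm_contDiff {n : ℕ∞} (hf : ContDiff ℝ n f) : ContDiff ℝ n (sqm f) :=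
  hf.mul (conj_contDiff hf)

lemma sqm_d1 (hf : ContDiff ℝ 1 f) (z : ℂ) :
    ‖fderiv ℝ (sqm f) z‖ ≤ 2 * (‖f z‖ * ‖iteratedFDeriv ℝ 1 f z‖) := by
  rw [norm_fd1]
  refine (mulD1 hf (conj_contDiff hf) z).trans ?_
  rw [conj_iter_norm]
  have h2 : ‖(starRingEnd ℂ) (f z)‖ = ‖f z‖ := RCLike.norm_conj _
  rw [h2]
  ring_nf
  exact le_refl _

lemma sqm_d2 (hf : ContDiff ℝ 2 f) (z : ℂ) :
    ‖fderiv ℝ (fderiv ℝ (sqm f)) z‖ ≤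
      2 * (‖f z‖ * ‖iteratedFDeriv ℝ 2 f z‖) + 2 * ‖iteratedFDeriv ℝ 1 f z‖ ^ 2 := by
  rw [norm_fd2]
  refine (mulD2 hf (conj_contDiff hf) z).trans ?_
  rw [conj_iter_norm, conj_iter_norm]
  have h2 : ‖(starRingEnd ℂ) (f z)‖ = ‖f z‖ := RCLike.norm_conj _
  rw [h2]
  ring_nf
  exact le_refl _

end Phi

lemma L4C (f : ℂ → ℂ) (hf : ContDiff ℝ 1 f)
    (hI2 : Integrable (fun z => ‖f z‖ ^ 2))
    (hI11 : Integrable (fun z => ‖f z‖ * ‖iteratedFDeriv ℝ 1 f z‖)) :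
    ∫⁻ z, (‖f z‖₊ : ℝ≥0∞) ^ 4 < ⊤ := by
  have hΦC : ContDiff ℝ 1 (sqm f) := sqm_contDiff hf
  have hΦd : Differentiable ℝ (sqm f) := hΦC.differentiable one_ne_zero
  have hfdcont : Continuous (fderiv ℝ (sqm f)) := hΦC.continuous_fderiv one_ne_zero
  have hΦi : Integrable (sqm f) := by
    refine Integrable.mono' hI2 hΦC.continuous.aestronglyMeasurable
      (Filter.Eventually.of_forall fun z => ?_)
    rw [sqm_norm]
  have hG1i : Integrable (fun z => fderiv ℝ (sqm f) z 1) := by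
    refine Integrable.mono' (hI11.const_mul 2)
      ((hfdcont.clm_apply continuous_const).aestronglyMeasurable)
      (Filter.Eventually.of_forall fun z => ?_)
    calc ‖fderiv ℝ (sqm f) z 1‖ ≤ ‖fderiv ℝ (sqm f) z‖ * ‖(1:ℂ)‖ :=
          ContinuousLinearMap.le_opNorm _ _
      _ = ‖fderiv ℝ (sqm f) z‖ := by simp
      _ ≤ 2 * (‖f z‖ * ‖iteratedFDeriv ℝ 1 f z‖) := sqm_d1 hf z
  have hG2i : Integrable (fun z => fderiv ℝ (sqm f) z I) := by
    refine Integrable.mono' (hI11.const_mul 2)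
      ((hfdcont.clm_apply continuous_const).aestronglyMeasurable)
      (Filter.Eventually.of_forall fun z => ?_)
    calc ‖fderiv ℝ (sqm f) z I‖ ≤ ‖fderiv ℝ (sqm f) z‖ * ‖I‖ :=
          ContinuousLinearMap.le_opNorm _ _
      _ = ‖fderiv ℝ (sqm f) z‖ := by simp
      _ ≤ 2 * (‖f z‖ * ‖iteratedFDeriv ℝ 1 f z‖) := sqm_d1 hf z
  have hX := sliceX (sqm f) hΦd hΦi hG1i
  have hY := sliceY (sqm f) hΦd hΦi hG2i
  set K1 : ℂ → ℝ≥0∞ := fun z => (‖fderiv ℝ (sqm f) z 1‖₊ : ℝ≥0∞) with hK1def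
  set K2 : ℂ → ℝ≥0∞ := fun z => (‖fderiv ℝ (sqm f) z I‖₊ : ℝ≥0∞) with hK2def
  have hK1m : Measurable K1 := (hfdcont.clm_apply continuous_const).measurable.enorm
  have hK2m : Measurable K2 := (hfdcont.clm_apply continuous_const).measurable.enorm
  set F : ℝ → ℝ≥0∞ := fun y => ∫⁻ s : ℝ, K1 (s + y * I) with hFdef
  set G : ℝ → ℝ≥0∞ := fun x => ∫⁻ t : ℝ, K2 (x + t * I) with hGdef
  have hlm : Continuous (fun p : ℝ × ℝ => (p.1 : ℂ) + p.2 * I) := by continuity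
  have hFm : Measurable F := by
    have : Measurable (fun p : ℝ × ℝ => K1 (p.1 + p.2 * I)) := hK1m.comp hlm.measurable
    exact this.lintegral_prod_left'
  have hGm : Measurable G := by
    have : Measurable (fun p : ℝ × ℝ => K2 (p.1 + p.2 * I)) := hK2m.comp hlm.measurable
    exact this.lintegral_prod_right'
  have hXz : ∀ᵐ z : ℂ, (‖sqm f z‖₊ : ℝ≥0∞) ≤ F z.im := by
    have hXey : ∀ᵐ y : ℝ, ∀ x : ℝ, (‖sqm f (x + y * I)‖₊ : ℝ≥0∞) ≤ F y := by
      filter_upwards [hX] with y hy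
      intro x
      obtain ⟨hyi, hyb⟩ := hy
      have h1 : ENNReal.ofReal ‖sqm f (x + y * I)‖ ≤
          ENNReal.ofReal (∫ s : ℝ, ‖fderiv ℝ (sqm f) (s + y * I) 1‖) :=
        ENNReal.ofReal_le_ofReal (hyb x)
      rw [ofReal_norm, ofReal_integral_norm_eq_lintegral_enorm hyi] at h1
      exact h1
    filter_upwards [ae_im hXey] with z hz
    have := hz z.re
    rwa [Complex.re_add_im] at this
  have hYz : ∀ᵐ z : ℂ, (‖sqm f z‖₊ : ℝ≥0∞) ≤ G z.re := by
    have hYex : ∀ᵐ x : ℝ, ∀ y : ℝ, (‖sqm f (x + y * I)‖₊ : ℝ≥0∞) ≤ G x := by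
      filter_upwards [hY] with x hx
      intro y
      obtain ⟨hxi, hxb⟩ := hx
      have h1 : ENNReal.ofReal ‖sqm f (x + y * I)‖ ≤
          ENNReal.ofReal (∫ t : ℝ, ‖fderiv ℝ (sqm f) (x + t * I) I‖) :=
        ENNReal.ofReal_le_ofReal (hxb y)
      rw [ofReal_norm, ofReal_integral_norm_eq_lintegral_enorm hxi] at h1
      exact h1
    filter_upwards [ae_re hYex] with z hz
    have := hz z.im
    rwa [Complex.re_add_im] at this
  have hmain : ∀ᵐ z : ℂ, (‖f z‖₊ : ℝ≥0∞) ^ 4 ≤ F z.im * G z.re := by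
    filter_upwards [hXz, hYz] with z h1 h2
    have hn : ((‖f z‖₊ : ℝ≥0∞)) ^ 4 = ((‖sqm f z‖₊ : ℝ≥0∞)) ^ 2 := by
      have he : ‖sqm f z‖₊ = ‖f z‖₊ ^ 2 := by
        ext
        push_cast
        exact sqm_norm f z
      rw [he]
      push_cast
      ring
    rw [hn, sq]
    exact mul_le_mul' h1 h2
  have htrans : ∫⁻ z : ℂ, F z.im * G z.re = (∫⁻ x : ℝ, G x) * (∫⁻ y : ℝ, F y) := by
    have hm : Measurable (fun z : ℂ => F z.im * G z.re) :=
      (hFm.comp Complex.measurable_im).mul (hGm.comp Complex.measurable_re)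
    have h := (Complex.volume_preserving_equiv_real_prod.symm).lintegral_comp hm
    rw [← h, MeasureTheory.Measure.volume_eq_prod]
    have he : (fun p : ℝ × ℝ => (fun z : ℂ => F z.im * G z.re)
        (Complex.measurableEquivRealProd.symm p)) = fun p : ℝ × ℝ => G p.1 * F p.2 := by
      funext p
      simp [Complex.measurableEquivRealProd_symm_apply, mul_comm]
    rw [he]
    exact lintegral_prod_mul hGm.aemeasurable hFm.aemeasurable
  have hFfin : ∫⁻ y : ℝ, F y < ⊤ := by
    have := lintegral_complex' K1 hK1m
    rw [hFdef, ← this]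
    exact hG1i.2
  have hGfin : ∫⁻ x : ℝ, G x < ⊤ := by
    have := lintegral_complex K2 hK2m
    rw [hGdef, ← this]
    exact hG2i.2
  calc ∫⁻ z : ℂ, (‖f z‖₊ : ℝ≥0∞) ^ 4 ≤ ∫⁻ z : ℂ, F z.im * G z.re := lintegral_mono_ae hmain
    _ = (∫⁻ x : ℝ, G x) * (∫⁻ y : ℝ, F y) := htrans
    _ < ⊤ := ENNReal.mul_lt_top hGfin hFfin

lemma supC (f : ℂ → ℂ) (hf : ContDiff ℝ 2 f)
    (hI0 : Integrable (fun z => ‖f z‖ ^ 2))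
    (hI1 : Integrable (fun z => ‖f z‖ * ‖iteratedFDeriv ℝ 1 f z‖))
    (hI2 : Integrable (fun z =>
      2 * (‖f z‖ * ‖iteratedFDeriv ℝ 2 f z‖) + 2 * ‖iteratedFDeriv ℝ 1 f z‖ ^ 2)) :
    ∃ M : ℝ, 0 ≤ M ∧ ∀ᵐ z : ℂ, ‖f z‖ ^ 2 ≤ M := by
  have hf1 : ContDiff ℝ 1 f := hf.of_le one_le_two
  have hΦC : ContDiff ℝ 2 (sqm f) := sqm_contDiff hf
  have hΦd : Differentiable ℝ (sqm f) := hΦC.differentiable two_ne_zero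
  have hfd1 : ContDiff ℝ 1 (fderiv ℝ (sqm f)) := hΦC.fderiv_right (le_refl 2)
  have hΦi : Integrable (sqm f) := by
    refine Integrable.mono' hI0 hΦC.continuous.aestronglyMeasurable
      (Filter.Eventually.of_forall fun z => ?_)
    rw [sqm_norm]
  set G : ℂ → ℂ := fun z => fderiv ℝ (sqm f) z 1 with hGdef
  have hGC1 : ContDiff ℝ 1 G := hfd1.clm_apply contDiff_const
  have hGd : Differentiable ℝ G := hGC1.differentiable one_ne_zero
  have hGcont : Continuous G := hGC1.continuous
  have hGi : Integrable G := by
    refine Integrable.mono' (hI1.const_mul 2) hGcont.aestronglyMeasurable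
      (Filter.Eventually.of_forall fun z => ?_)
    calc ‖G z‖ ≤ ‖fderiv ℝ (sqm f) z‖ * ‖(1:ℂ)‖ := ContinuousLinearMap.le_opNorm _ _
      _ = ‖fderiv ℝ (sqm f) z‖ := by simp
      _ ≤ 2 * (‖f z‖ * ‖iteratedFDeriv ℝ 1 f z‖) := sqm_d1 hf1 z
  -- derivative of G
  have hdd : Differentiable ℝ (fderiv ℝ (sqm f)) := hfd1.differentiable one_ne_zero
  have hGder : ∀ z, HasFDerivAt G
      ((ContinuousLinearMap.apply ℝ ℂ (1:ℂ)).comp (fderiv ℝ (fderiv ℝ (sqm f)) z)) z := by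
    intro z
    exact ((ContinuousLinearMap.apply ℝ ℂ (1:ℂ)).hasFDerivAt).comp z (hdd z).hasFDerivAt
  have hKbound : ∀ z, ‖fderiv ℝ G z I‖ ≤ ‖fderiv ℝ (fderiv ℝ (sqm f)) z‖ := by
    intro z
    rw [(hGder z).fderiv]
    calc ‖((ContinuousLinearMap.apply ℝ ℂ (1:ℂ)).comp (fderiv ℝ (fderiv ℝ (sqm f)) z)) I‖
        = ‖(fderiv ℝ (fderiv ℝ (sqm f)) z I) 1‖ := rfl
      _ ≤ ‖fderiv ℝ (fderiv ℝ (sqm f)) z I‖ * ‖(1:ℂ)‖ := ContinuousLinearMap.le_opNorm _ _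
      _ = ‖fderiv ℝ (fderiv ℝ (sqm f)) z I‖ := by simp
      _ ≤ ‖fderiv ℝ (fderiv ℝ (sqm f)) z‖ * ‖I‖ := ContinuousLinearMap.le_opNorm _ _
      _ = ‖fderiv ℝ (fderiv ℝ (sqm f)) z‖ := by simp
  have hKcont : Continuous (fun z => fderiv ℝ G z I) :=
    (hGC1.continuous_fderiv one_ne_zero).clm_apply continuous_const
  have hKi : Integrable (fun z => fderiv ℝ G z I) := by
    refine Integrable.mono' hI2 hKcont.aestronglyMeasurable
      (Filter.Eventually.of_forall fun z => ?_)
    exact (hKbound z).trans (sqm_d2 hf z)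
  have hKm : Measurable (fun z => (‖fderiv ℝ G z I‖₊ : ℝ≥0∞)) := hKcont.measurable.enorm
  set CK : ℝ≥0∞ := ∫⁻ z : ℂ, (‖fderiv ℝ G z I‖₊ : ℝ≥0∞) with hCKdef
  have hCK : CK < ⊤ := hKi.2
  have hX := sliceX (sqm f) hΦd hΦi hGi
  have hY := sliceY G hGd hGi hKi
  -- pointwise-in-t bound for G slices
  have hYex : ∀ᵐ s : ℝ, ∀ t : ℝ, (‖G (s + t * I)‖₊ : ℝ≥0∞) ≤
      ∫⁻ t' : ℝ, (‖fderiv ℝ G (s + t' * I) I‖₊ : ℝ≥0∞) := by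
    filter_upwards [hY] with s hs
    intro t
    obtain ⟨hsi, hsb⟩ := hs
    have h1 : ENNReal.ofReal ‖G (s + t * I)‖ ≤
        ENNReal.ofReal (∫ t' : ℝ, ‖fderiv ℝ G (s + t' * I) I‖) :=
      ENNReal.ofReal_le_ofReal (hsb t)
    rwa [ofReal_norm, ofReal_integral_norm_eq_lintegral_enorm hsi] at h1
  have hfinal : ∀ᵐ y : ℝ, ∀ x : ℝ, ENNReal.ofReal ‖sqm f (x + y * I)‖ ≤ CK := by
    filter_upwards [hX] with y hy
    intro x
    obtain ⟨hyi, hyb⟩ := hy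
    have h1 : ENNReal.ofReal ‖sqm f (x + y * I)‖ ≤
        ENNReal.ofReal (∫ s : ℝ, ‖G (s + y * I)‖) := ENNReal.ofReal_le_ofReal (hyb x)
    rw [ofReal_integral_norm_eq_lintegral_enorm hyi] at h1
    refine h1.trans ?_
    have h2 : ∫⁻ s : ℝ, (‖G (s + y * I)‖₊ : ℝ≥0∞) ≤
        ∫⁻ s : ℝ, ∫⁻ t' : ℝ, (‖fderiv ℝ G (s + t' * I) I‖₊ : ℝ≥0∞) := by
      refine lintegral_mono_ae ?_
      filter_upwards [hYex] with s hsx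
      exact hsx y
    refine h2.trans ?_
    rw [hCKdef, lintegral_complex _ hKm]
  have haez : ∀ᵐ z : ℂ, ‖f z‖ ^ 2 ≤ CK.toReal := by
    have h := ae_im hfinal
    filter_upwards [h] with z hz
    have h2 := hz z.re
    rw [Complex.re_add_im] at h2
    have h3 : ‖sqm f z‖ ≤ CK.toReal :=
      (ENNReal.ofReal_le_iff_le_toReal hCK.ne).mp h2
    rwa [sqm_norm] at h3
  exact ⟨CK.toReal, ENNReal.toReal_nonneg, haez⟩

lemma opnorm_le_basis (L : ℂ →L[ℝ] ℂ) : ‖L‖ ≤ ‖L 1‖ + ‖L I‖ := by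
  refine ContinuousLinearMap.opNorm_le_bound _ (by positivity) (fun v => ?_)
  have hv : v = v.re • (1:ℂ) + v.im • I := by
    simp [Complex.real_smul, Complex.re_add_im]
  calc ‖L v‖ = ‖v.re • L 1 + v.im • L I‖ := by
        conv_lhs => rw [hv]
        rw [map_add, L.map_smul, L.map_smul]
    _ ≤ ‖v.re • L 1‖ + ‖v.im • L I‖ := norm_add_le _ _
    _ = |v.re| * ‖L 1‖ + |v.im| * ‖L I‖ := by rw [norm_smul, norm_smul] ; simp
    _ ≤ ‖v‖ * ‖L 1‖ + ‖v‖ * ‖L I‖ := by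
        gcongr
        · simpa using Complex.abs_re_le_norm v
        · simpa using Complex.abs_im_le_norm v
    _ = (‖L 1‖ + ‖L I‖) * ‖v‖ := by ring

lemma pow_induction (u : ℂ → ℂ) (hu : ContDiff ℝ 2 u) (M : ℝ) (hM : 1 ≤ M)
    (k : ℕ) (hk : 1 ≤ k) (z : ℂ) (hz : ‖u z‖ ≤ M) :
    ‖iteratedFDeriv ℝ 0 (fun w => u w ^ k) z‖ ≤ M ^ (k-1) * ‖u z‖ ∧
    ‖iteratedFDeriv ℝ 1 (fun w => u w ^ k) z‖ ≤ k * M ^ (k-1) * ‖iteratedFDeriv ℝ 1 u z‖ ∧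
    ‖iteratedFDeriv ℝ 2 (fun w => u w ^ k) z‖ ≤
      k * M ^ k * ‖iteratedFDeriv ℝ 2 u z‖ + (k:ℝ)^2 * M ^ k * ‖iteratedFDeriv ℝ 1 u z‖ ^ 2 := by
  have hM0 : (0:ℝ) ≤ M := le_trans zero_le_one hM
  induction k with
  | zero => omega
  | succ n ih =>
    rcases Nat.eq_or_lt_of_le hk with h1 | h2
    · -- n + 1 = 1, i.e. n = 0
      have hn : n = 0 := by omega
      subst hn
      have he : (fun w => u w ^ 1) = u := by funext w; rw [pow_one]
      rw [he]
      refine ⟨?_, ?_, ?_⟩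
      · simp [norm_iteratedFDeriv_zero]
      · simp
      · have h01 : ‖iteratedFDeriv ℝ 2 u z‖ ≤ M * ‖iteratedFDeriv ℝ 2 u z‖ :=
          le_mul_of_one_le_left (norm_nonneg _) hM
        have h02 : (0:ℝ) ≤ M * ‖iteratedFDeriv ℝ 1 u z‖ ^ 2 := by positivity
        push_cast
        nlinarith
    · -- n ≥ 1
      have hn1 : 1 ≤ n := by omega
      obtain ⟨ih0, ih1, ih2⟩ := ih hn1
      have hupow : ContDiff ℝ 2 (fun w => u w ^ n) := hu.pow n
      have he : (fun w => u w ^ (n+1)) = fun w => u w * u w ^ n := by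
        funext w; rw [pow_succ]; ring
      have hNn : n - 1 + 1 = n := by omega
      have hMpow : M ^ (n-1) * M = M ^ n := by
        rw [← pow_succ, hNn]
      have hpow_le : M ^ (n-1) ≤ M ^ n := pow_le_pow_right₀ hM (by omega)
      have hpow_le2 : M ^ n ≤ M ^ (n+1) := pow_le_pow_right₀ hM (by omega)
      have hb0 : ‖iteratedFDeriv ℝ 0 (fun w => u w ^ (n+1)) z‖ ≤ M ^ (n+1-1) * ‖u z‖ := by
        rw [norm_iteratedFDeriv_zero]
        have : ‖u z ^ (n+1)‖ = ‖u z‖ ^ (n+1) := norm_pow _ _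
        rw [this, pow_succ]
        have h4 : ‖u z‖ ^ n ≤ M ^ n := pow_le_pow_left₀ (norm_nonneg _) hz n
        calc ‖u z‖ ^ n * ‖u z‖ ≤ M ^ n * ‖u z‖ := by
              gcongr
          _ = M ^ (n+1-1) * ‖u z‖ := by norm_num
      have hiter0 : ‖u z ^ n‖ ≤ M ^ n := by
        rw [norm_pow]; exact pow_le_pow_left₀ (norm_nonneg _) hz n
      set A := ‖iteratedFDeriv ℝ 1 u z‖ with hA
      set N2 := ‖iteratedFDeriv ℝ 2 u z‖ with hN2
      set B := ‖iteratedFDeriv ℝ 1 (fun w => u w ^ n) z‖ with hB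
      set C := ‖iteratedFDeriv ℝ 2 (fun w => u w ^ n) z‖ with hC
      have hA0 : 0 ≤ A := norm_nonneg _
      have hB0 : 0 ≤ B := norm_nonneg _
      have hC0 : 0 ≤ C := norm_nonneg _
      have hN20 : 0 ≤ N2 := norm_nonneg _
      have hb1 : ‖iteratedFDeriv ℝ 1 (fun w => u w ^ (n+1)) z‖ ≤
          (n+1 : ℝ) * M ^ n * A := by
        rw [he]
        refine (mulD1 (hu.of_le one_le_two) (hupow.of_le one_le_two) z).trans ?_
        have g1 : ‖u z‖ * B ≤ M * B := mul_le_mul_of_nonneg_right hz hB0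
        have g2 : M * B ≤ M * ((n:ℝ) * M^(n-1) * A) := mul_le_mul_of_nonneg_left ih1 hM0
        have g3 : A * ‖u z ^ n‖ ≤ A * M^n := mul_le_mul_of_nonneg_left hiter0 hA0
        have g4 : M * ((n:ℝ) * M^(n-1) * A) = (n:ℝ) * M^n * A := by
          rw [← hMpow]; ring
        nlinarith
      have hb2 : ‖iteratedFDeriv ℝ 2 (fun w => u w ^ (n+1)) z‖ ≤
          (n+1 : ℝ) * M ^ (n+1) * N2 + ((n:ℝ)+1)^2 * M ^ (n+1) * A ^ 2 := by
        rw [he]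
        refine (mulD2 hu hupow z).trans ?_
        have g1 : ‖u z‖ * C ≤ M * ((n:ℝ) * M^n * N2 + (n:ℝ)^2 * M^n * A^2) :=
          le_trans (mul_le_mul_of_nonneg_right hz hC0) (mul_le_mul_of_nonneg_left ih2 hM0)
        have g1' : M * ((n:ℝ) * M^n * N2 + (n:ℝ)^2 * M^n * A^2) =
            (n:ℝ) * M^(n+1) * N2 + (n:ℝ)^2 * M^(n+1) * A^2 := by ring
        have g2 : A * B ≤ (n:ℝ) * M^(n-1) * A^2 := by
          have := mul_le_mul_of_nonneg_left ih1 hA0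
          calc A * B ≤ A * ((n:ℝ) * M^(n-1) * A) := this
            _ = (n:ℝ) * M^(n-1) * A^2 := by ring
        have g2' : (n:ℝ) * M^(n-1) * A^2 ≤ (n:ℝ) * M^(n+1) * A^2 := by
          have hle : M^(n-1) ≤ M^(n+1) := hpow_le.trans hpow_le2
          exact mul_le_mul_of_nonneg_right
            (mul_le_mul_of_nonneg_left hle (Nat.cast_nonneg n)) (sq_nonneg A)
        have g3 : N2 * ‖u z ^ n‖ ≤ M^(n+1) * N2 := by
          calc N2 * ‖u z ^ n‖ ≤ N2 * M^n := mul_le_mul_of_nonneg_left hiter0 hN20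
            _ ≤ N2 * M^(n+1) := mul_le_mul_of_nonneg_left hpow_le2 hN20
            _ = M^(n+1) * N2 := by ring
        have hsum : ‖u z‖ * C + 2 * (A * B) + N2 * ‖u z ^ n‖ ≤
            (n:ℝ) * M^(n+1) * N2 + (n:ℝ)^2 * M^(n+1) * A^2 +
            2 * ((n:ℝ) * M^(n+1) * A^2) + M^(n+1) * N2 := by
          have hg1 := g1.trans (le_of_eq g1')
          linarith [g2.trans g2', g3]
        refine hsum.trans ?_
        nlinarith [mul_nonneg (pow_nonneg hM0 (n+1)) (sq_nonneg A)]
      refine ⟨hb0, ?_, ?_⟩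
      · push_cast at hb1 ⊢
        simpa [Nat.add_sub_cancel] using hb1
      · push_cast at hb2 ⊢
        simpa using hb2

end Aux2

lemma four_bound (a b : ℝ) (ha : 0 ≤ a) (hb : 0 ≤ b) : (a+b)^4 ≤ 8*(a^4+b^4) := by
  nlinarith [sq_nonneg (a-b), sq_nonneg (a+b), sq_nonneg (a^2-b^2), mul_nonneg ha hb,
    sq_nonneg (a*b), sq_nonneg (a^2+b^2)]

/-- For `γ > 0`, the space `H²_γ(ℝ²)` is closed under powers:
if `u ∈ H²_γ(ℝ²)` and `k ≥ 1`, then `u^k ∈ H²_γ(ℝ²)`. -/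
theorem weighted_H2_closed_under_powers (γ : ℝ) (hγ : 0 < γ) (u : ℂ → ℂ)
    (hu : H2gammaMem γ u) (k : ℕ) (hk : 1 ≤ k) :
    H2gammaMem γ (fun z => u z ^ k) := by
  obtain ⟨huC, humem⟩ := hu
  have hγ0 : (0:ℝ) ≤ γ := hγ.le
  have wtc : Continuous (wt γ) := (contDiff_wt γ).continuous
  -- continuity of iterated derivatives
  have hcont : ∀ i : ℕ, i ≤ 2 → Continuous (fun z => ‖iteratedFDeriv ℝ i u z‖) := by
    intro i hi
    exact (huC.continuous_iteratedFDeriv (by exact_mod_cast hi)).norm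
  have haesm : ∀ i : ℕ, i ≤ 2 →
      AEStronglyMeasurable (fun z => ‖iteratedFDeriv ℝ i u z‖) volume := fun i hi =>
    (hcont i hi).aestronglyMeasurable
  -- weighted L² memberships
  have m0 := humem 0 (by norm_num)
  have m1 := humem 1 (by norm_num)
  have m2 := humem 2 le_rfl
  -- unweighted
  have munw : ∀ i : ℕ, (hi : i ≤ 2) → MemLp (fun z => ‖iteratedFDeriv ℝ i u z‖) 2 volume := by
    intro i hi
    refine (humem i hi).mono' (haesm i hi) (Filter.Eventually.of_forall fun z => ?_)
    rw [Real.norm_eq_abs, _root_.abs_of_nonneg (norm_nonneg _)]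
    exact le_mul_of_one_le_left (norm_nonneg _) (one_le_wt hγ0 z)
  -- integrable squares (weighted and unweighted)
  have sqw : ∀ i : ℕ, (hi : i ≤ 2) →
      Integrable (fun z => (wt γ z * ‖iteratedFDeriv ℝ i u z‖) ^ 2) := fun i hi =>
    (humem i hi).integrable_sq
  have squ : ∀ i : ℕ, (hi : i ≤ 2) →
      Integrable (fun z => ‖iteratedFDeriv ℝ i u z‖ ^ 2) := fun i hi =>
    (munw i hi).integrable_sq
  have produ : ∀ i j : ℕ, (hi : i ≤ 2) → (hj : j ≤ 2) →
      Integrable (fun z => ‖iteratedFDeriv ℝ i u z‖ * ‖iteratedFDeriv ℝ j u z‖) := by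
    intro i j hi hj
    refine Integrable.mono' ((squ i hi).add (squ j hj))
      (((hcont i hi).mul (hcont j hj)).aestronglyMeasurable)
      (Filter.Eventually.of_forall fun z => ?_)
    simp only [Pi.add_apply]
    rw [Real.norm_eq_abs, _root_.abs_of_nonneg (mul_nonneg (norm_nonneg _) (norm_nonneg _))]
    nlinarith [sq_nonneg (‖iteratedFDeriv ℝ i u z‖ - ‖iteratedFDeriv ℝ j u z‖),
      norm_nonneg (iteratedFDeriv ℝ i u z), norm_nonneg (iteratedFDeriv ℝ j u z)]
  -- the L∞ bound
  have hn0 : (fun z : ℂ => ‖iteratedFDeriv ℝ 0 u z‖) = fun z => ‖u z‖ := by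
    funext z; rw [norm_iteratedFDeriv_zero]
  obtain ⟨M0, hM00, haeM0⟩ : ∃ M : ℝ, 0 ≤ M ∧ ∀ᵐ z : ℂ, ‖u z‖ ^ 2 ≤ M := by
    refine supC u huC ?_ ?_ ?_
    · have h := squ 0 (by norm_num)
      simp only [norm_iteratedFDeriv_zero] at h
      exact h
    · have h := produ 0 1 (by norm_num) (by norm_num)
      simp only [norm_iteratedFDeriv_zero] at h
      exact h
    · have ha := (produ 0 2 (by norm_num) (by norm_num)).const_mul 2
      have hb := (squ 1 (by norm_num)).const_mul 2
      simp only [norm_iteratedFDeriv_zero] at ha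
      exact ha.add hb
  set M : ℝ := max 1 (Real.sqrt M0) with hMdef
  have hM1 : 1 ≤ M := le_max_left _ _
  have hM0' : 0 ≤ M := le_trans zero_le_one hM1
  have haeM : ∀ᵐ z : ℂ, ‖u z‖ ≤ M := by
    filter_upwards [haeM0] with z hz
    have h1 : ‖u z‖ ≤ Real.sqrt M0 := by
      rw [← Real.sqrt_sq (norm_nonneg (u z))]
      exact Real.sqrt_le_sqrt hz
    exact h1.trans (le_max_right _ _)
  -- the weighted L⁴ gradient bound : Memℒp (wt γ * N1²) 2
  have hL4 : MemLp (fun z => wt γ z * ‖iteratedFDeriv ℝ 1 u z‖ ^ 2) 2 volume := by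
    set δ : ℝ := γ/2 with hδdef
    have hδ0 : 0 ≤ δ := by positivity
    have hδγ : δ ≤ γ := by simp only [hδdef]; linarith
    have h2δ : 2*δ = γ := by simp only [hδdef]; ring
    have hwsq : ∀ z : ℂ, wt δ z ^ 2 = wt γ z := by
      intro z; rw [wt_sq, h2δ]
    have hfd1u : ContDiff ℝ 1 (fderiv ℝ u) := huC.fderiv_right (by norm_num)
    have hdd : Differentiable ℝ (fderiv ℝ u) := hfd1u.differentiable one_ne_zero
    have hw2C : ContDiff ℝ 1 (wt δ) := (contDiff_wt δ).of_le one_le_two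
    -- finiteness of the fourth moment of each weighted partial derivative
    have hfin : ∀ v : ℂ, ‖v‖ = 1 →
        (ContDiff ℝ 1 (fun z => wt δ z • fderiv ℝ u z v)) ∧
        ∫⁻ z, (‖wt δ z • fderiv ℝ u z v‖₊ : ℝ≥0∞) ^ 4 < ⊤ := by
      intro v hv
      set h : ℂ → ℂ := fun z => wt δ z • fderiv ℝ u z v with hhdef
      have happC : ContDiff ℝ 1 (fun z => fderiv ℝ u z v) := hfd1u.clm_apply contDiff_const
      have hhC : ContDiff ℝ 1 h := hw2C.smul happC
      have hnorm : ∀ z, ‖h z‖ = wt δ z * ‖fderiv ℝ u z v‖ := by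
        intro z
        rw [hhdef]
        rw [norm_smul, Real.norm_eq_abs, _root_.abs_of_pos (wt_pos z)]
      have happ_le : ∀ z, ‖fderiv ℝ u z v‖ ≤ ‖iteratedFDeriv ℝ 1 u z‖ := by
        intro z
        calc ‖fderiv ℝ u z v‖ ≤ ‖fderiv ℝ u z‖ * ‖v‖ := ContinuousLinearMap.le_opNorm _ _
          _ = ‖fderiv ℝ u z‖ := by rw [hv, mul_one]
          _ = ‖iteratedFDeriv ℝ 1 u z‖ := norm_fd1 u z
      have hb : ∀ z, ‖h z‖ ≤ wt γ z * ‖iteratedFDeriv ℝ 1 u z‖ := by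
        intro z
        rw [hnorm z]
        calc wt δ z * ‖fderiv ℝ u z v‖ ≤ wt δ z * ‖iteratedFDeriv ℝ 1 u z‖ :=
              mul_le_mul_of_nonneg_left (happ_le z) (wt_pos z).le
          _ ≤ wt γ z * ‖iteratedFDeriv ℝ 1 u z‖ :=
              mul_le_mul_of_nonneg_right (wt_le_wt hδγ z) (norm_nonneg _)
      have hI2h : Integrable (fun z => ‖h z‖ ^ 2) := by
        refine Integrable.mono' (sqw 1 (by norm_num))
          ((hhC.continuous.norm.pow 2).aestronglyMeasurable)
          (Filter.Eventually.of_forall fun z => ?_)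
        rw [Real.norm_eq_abs, _root_.abs_of_nonneg (by positivity)]
        exact pow_le_pow_left₀ (norm_nonneg _) (hb z) 2
      have hIterb : ∀ z, ‖iteratedFDeriv ℝ 1 h z‖ ≤
          wt δ z * ‖iteratedFDeriv ℝ 2 u z‖ + 2*δ*wt δ z * ‖iteratedFDeriv ℝ 1 u z‖ := by
        intro z
        rw [← norm_fd1]
        obtain ⟨L, hL, hLn⟩ := wt_fderiv_bound δ hδ0 z
        have happD : HasFDerivAt (fun w => fderiv ℝ u w v)
            ((ContinuousLinearMap.apply ℝ ℂ v).comp (fderiv ℝ (fderiv ℝ u) z)) z :=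
          ((ContinuousLinearMap.apply ℝ ℂ v).hasFDerivAt).comp z (hdd z).hasFDerivAt
        have hprod := hL.smul happD
        rw [HasFDerivAt.fderiv (f := h) hprod]
        refine le_trans (norm_add_le _ _) ?_
        have hterm1 : ‖wt δ z • ((ContinuousLinearMap.apply ℝ ℂ v).comp
            (fderiv ℝ (fderiv ℝ u) z))‖ ≤ wt δ z * ‖iteratedFDeriv ℝ 2 u z‖ := by
          rw [norm_smul, Real.norm_eq_abs, _root_.abs_of_pos (wt_pos z)]
          refine mul_le_mul_of_nonneg_left ?_ (wt_pos z).le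
          rw [← norm_fd2]
          refine ContinuousLinearMap.opNorm_le_bound _ (norm_nonneg (fderiv ℝ (fderiv ℝ u) z)) (fun w => ?_)
          calc ‖((ContinuousLinearMap.apply ℝ ℂ v).comp (fderiv ℝ (fderiv ℝ u) z)) w‖
              = ‖fderiv ℝ (fderiv ℝ u) z w v‖ := rfl
            _ ≤ ‖fderiv ℝ (fderiv ℝ u) z w‖ * ‖v‖ := ContinuousLinearMap.le_opNorm _ _
            _ = ‖fderiv ℝ (fderiv ℝ u) z w‖ := by rw [hv, mul_one]
            _ ≤ ‖fderiv ℝ (fderiv ℝ u) z‖ * ‖w‖ := ContinuousLinearMap.le_opNorm _ _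
        have hterm2 : ‖L.smulRight (fderiv ℝ u z v)‖ ≤
            2*δ*wt δ z * ‖iteratedFDeriv ℝ 1 u z‖ := by
          rw [ContinuousLinearMap.norm_smulRight_apply]
          exact mul_le_mul hLn (happ_le z) (norm_nonneg _) (mul_nonneg (by positivity) (wt_pos z).le)
        linarith
      have hI11h : Integrable (fun z => ‖h z‖ * ‖iteratedFDeriv ℝ 1 h z‖) := by
        refine Integrable.mono'
          (((sqw 1 (by norm_num)).add (sqw 2 le_rfl)).const_mul (1+2*δ))
          ((hhC.continuous.norm.mul
            (hhC.continuous_iteratedFDeriv (by exact_mod_cast le_rfl)).norm).aestronglyMeasurable)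
          (Filter.Eventually.of_forall fun z => ?_)
        rw [Real.norm_eq_abs, _root_.abs_of_nonneg (by positivity)]
        set a := wt γ z * ‖iteratedFDeriv ℝ 1 u z‖ with hadef
        set b := wt γ z * ‖iteratedFDeriv ℝ 2 u z‖ with hbdef
        have ha0 : 0 ≤ a := mul_nonneg (wt_pos z).le (norm_nonneg _)
        have hb0 : 0 ≤ b := mul_nonneg (wt_pos z).le (norm_nonneg _)
        have hw : wt δ z ≤ wt γ z := wt_le_wt hδγ z
        have h1 : ‖h z‖ ≤ a := hb z
        have h2 : ‖iteratedFDeriv ℝ 1 h z‖ ≤ b + 2*δ*a := by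
          refine (hIterb z).trans ?_
          have e1 : wt δ z * ‖iteratedFDeriv ℝ 2 u z‖ ≤ b :=
            mul_le_mul_of_nonneg_right hw (norm_nonneg _)
          have e2 : 2*δ*wt δ z * ‖iteratedFDeriv ℝ 1 u z‖ ≤ 2*δ*a := by
            have : wt δ z * ‖iteratedFDeriv ℝ 1 u z‖ ≤ a :=
              mul_le_mul_of_nonneg_right hw (norm_nonneg _)
            calc 2*δ*wt δ z * ‖iteratedFDeriv ℝ 1 u z‖
                = 2*δ*(wt δ z * ‖iteratedFDeriv ℝ 1 u z‖) := by ring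
              _ ≤ 2*δ*a := by nlinarith
          linarith
        calc ‖h z‖ * ‖iteratedFDeriv ℝ 1 h z‖ ≤ a * (b + 2*δ*a) := by
              refine mul_le_mul h1 h2 (norm_nonneg _) ha0
          _ ≤ (1+2*δ) * (a^2 + b^2) := by nlinarith [sq_nonneg (a-b)]
      exact ⟨hhC, L4C h hhC hI2h hI11h⟩
    obtain ⟨hh1C, hfin1⟩ := hfin 1 (by simp)
    obtain ⟨hhIC, hfinI⟩ := hfin I (by simp)
    have haesm2 : AEStronglyMeasurable
        (fun z => wt γ z * ‖iteratedFDeriv ℝ 1 u z‖ ^ 2) volume :=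
      (wtc.mul ((hcont 1 (by norm_num)).pow 2)).aestronglyMeasurable
    refine (memLp_two_iff_integrable_sq haesm2).mpr ?_
    refine ⟨(wtc.mul ((hcont 1 (by norm_num)).pow 2)).pow 2 |>.aestronglyMeasurable, ?_⟩
    have hptw : ∀ z : ℂ, (‖(wt γ z * ‖iteratedFDeriv ℝ 1 u z‖ ^ 2) ^ 2‖₊ : ℝ≥0∞) ≤
        8 * ((‖wt δ z • fderiv ℝ u z 1‖₊ : ℝ≥0∞) ^ 4 +
             (‖wt δ z • fderiv ℝ u z I‖₊ : ℝ≥0∞) ^ 4) := by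
      intro z
      set a := ‖wt δ z • fderiv ℝ u z 1‖ with hadef
      set b := ‖wt δ z • fderiv ℝ u z I‖ with hbdef
      have ha0 : 0 ≤ a := norm_nonneg _
      have hb0 : 0 ≤ b := norm_nonneg _
      have hbase : wt δ z * ‖iteratedFDeriv ℝ 1 u z‖ ≤ a + b := by
        have h1 : ‖iteratedFDeriv ℝ 1 u z‖ ≤ ‖fderiv ℝ u z 1‖ + ‖fderiv ℝ u z I‖ := by
          rw [← norm_fd1]
          exact opnorm_le_basis _
        have ha' : a = wt δ z * ‖fderiv ℝ u z 1‖ := by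
          rw [hadef, norm_smul, Real.norm_eq_abs, _root_.abs_of_pos (wt_pos z)]
        have hb' : b = wt δ z * ‖fderiv ℝ u z I‖ := by
          rw [hbdef, norm_smul, Real.norm_eq_abs, _root_.abs_of_pos (wt_pos z)]
        rw [ha', hb', ← mul_add]
        exact mul_le_mul_of_nonneg_left h1 (wt_pos z).le
      have hreal : (wt γ z * ‖iteratedFDeriv ℝ 1 u z‖ ^ 2) ^ 2 ≤ 8 * (a^4 + b^4) := by
        have he : (wt γ z * ‖iteratedFDeriv ℝ 1 u z‖ ^ 2) ^ 2 =
            (wt δ z * ‖iteratedFDeriv ℝ 1 u z‖) ^ 4 := by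
          rw [← hwsq z]; ring
        rw [he]
        have h4 : (wt δ z * ‖iteratedFDeriv ℝ 1 u z‖) ^ 4 ≤ (a + b) ^ 4 :=
          pow_le_pow_left₀ (mul_nonneg (wt_pos z).le (norm_nonneg _)) hbase 4
        exact h4.trans (four_bound a b ha0 hb0)
      calc (‖(wt γ z * ‖iteratedFDeriv ℝ 1 u z‖ ^ 2) ^ 2‖₊ : ℝ≥0∞)
          = ENNReal.ofReal ((wt γ z * ‖iteratedFDeriv ℝ 1 u z‖ ^ 2) ^ 2) :=
            Real.enorm_eq_ofReal (by positivity)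
        _ ≤ ENNReal.ofReal (8 * (a^4 + b^4)) := ENNReal.ofReal_le_ofReal hreal
        _ = 8 * ((‖wt δ z • fderiv ℝ u z 1‖₊ : ℝ≥0∞) ^ 4 +
             (‖wt δ z • fderiv ℝ u z I‖₊ : ℝ≥0∞) ^ 4) := by
            rw [ENNReal.ofReal_mul (by norm_num), ENNReal.ofReal_add (by positivity) (by positivity),
              ENNReal.ofReal_pow ha0, ENNReal.ofReal_pow hb0,
              ofReal_norm, ofReal_norm, enorm_eq_nnnorm, enorm_eq_nnnorm]
            norm_num
    have hmeas1 : Measurable (fun z => (‖wt δ z • fderiv ℝ u z 1‖₊ : ℝ≥0∞) ^ 4) :=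
      (hh1C.continuous.measurable.enorm).pow_const 4
    have hmeasI : Measurable (fun z => (‖wt δ z • fderiv ℝ u z I‖₊ : ℝ≥0∞) ^ 4) :=
      (hhIC.continuous.measurable.enorm).pow_const 4
    refine lt_of_le_of_lt (lintegral_mono hptw) ?_
    rw [lintegral_const_mul' _ _ (by norm_num), lintegral_add_left hmeas1]
    refine ENNReal.mul_lt_top (by norm_num) (ENNReal.add_lt_top.mpr ⟨hfin1, hfinI⟩)
  -- conclusion
  refine ⟨huC.pow k, ?_⟩
  intro i hi
  have hcontk : Continuous (fun z => wt γ z * ‖iteratedFDeriv ℝ i (fun w => u w ^ k) z‖) :=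
    wtc.mul ((huC.pow k).continuous_iteratedFDeriv (by exact_mod_cast hi)).norm
  interval_cases i
  · -- i = 0
    refine (m0.const_mul (M ^ (k-1))).mono' hcontk.aestronglyMeasurable ?_
    filter_upwards [haeM] with z hz
    obtain ⟨B0, _, _⟩ := pow_induction u huC M hM1 k hk z hz
    rw [Real.norm_eq_abs, _root_.abs_of_nonneg (mul_nonneg (wt_pos z).le (norm_nonneg _))]
    calc wt γ z * ‖iteratedFDeriv ℝ 0 (fun w => u w ^ k) z‖
        ≤ wt γ z * (M ^ (k-1) * ‖u z‖) := by
          exact mul_le_mul_of_nonneg_left B0 (wt_pos z).le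
      _ = M ^ (k-1) * (wt γ z * ‖iteratedFDeriv ℝ 0 u z‖) := by
          rw [norm_iteratedFDeriv_zero]; ring
  · -- i = 1
    refine (m1.const_mul ((k : ℝ) * M ^ (k-1))).mono' hcontk.aestronglyMeasurable ?_
    filter_upwards [haeM] with z hz
    obtain ⟨_, B1, _⟩ := pow_induction u huC M hM1 k hk z hz
    rw [Real.norm_eq_abs, _root_.abs_of_nonneg (mul_nonneg (wt_pos z).le (norm_nonneg _))]
    calc wt γ z * ‖iteratedFDeriv ℝ 1 (fun w => u w ^ k) z‖
        ≤ wt γ z * ((k : ℝ) * M ^ (k-1) * ‖iteratedFDeriv ℝ 1 u z‖) :=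
          mul_le_mul_of_nonneg_left B1 (wt_pos z).le
      _ = (k : ℝ) * M ^ (k-1) * (wt γ z * ‖iteratedFDeriv ℝ 1 u z‖) := by ring
  · -- i = 2
    have hmem : MemLp (fun z => (k : ℝ) * M ^ k * (wt γ z * ‖iteratedFDeriv ℝ 2 u z‖) +
        (k:ℝ)^2 * M ^ k * (wt γ z * ‖iteratedFDeriv ℝ 1 u z‖ ^ 2)) 2 volume :=
      (m2.const_mul _).add (hL4.const_mul _)
    refine hmem.mono' hcontk.aestronglyMeasurable ?_
    filter_upwards [haeM] with z hz
    obtain ⟨_, _, B2⟩ := pow_induction u huC M hM1 k hk z hz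
    rw [Real.norm_eq_abs, _root_.abs_of_nonneg (mul_nonneg (wt_pos z).le (norm_nonneg _))]
    calc wt γ z * ‖iteratedFDeriv ℝ 2 (fun w => u w ^ k) z‖
        ≤ wt γ z * ((k:ℝ) * M ^ k * ‖iteratedFDeriv ℝ 2 u z‖ +
            (k:ℝ)^2 * M ^ k * ‖iteratedFDeriv ℝ 1 u z‖ ^ 2) :=
          mul_le_mul_of_nonneg_left B2 (wt_pos z).le
      _ = (k : ℝ) * M ^ k * (wt γ z * ‖iteratedFDeriv ℝ 2 u z‖) +
            (k:ℝ)^2 * M ^ k * (wt γ z * ‖iteratedFDeriv ℝ 1 u z‖ ^ 2) := by ring
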